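/- The function I(x,y) = x²/(1+x)² + y²/(1+x)⁶ is a first integral of the Liénard-type system ẋ = y, ẏ = -g(x) - f(x)y² where f(x) = -P'(x)/(1+P(x)), g(x) = x(1+P(x)), and P(x) = 3x + 3x² + x³ = (1+x)³ - 1, valid for x ≠ -1. -/

import Mathlib

/-- I(x,y) = x²/(1+x)² + y²/(1+x)⁶ is a first integral of ẋ = y,
ẏ = -g(x)-f(x)y² with f(x) = -3/(1+x), g(x) = x(1+x)³, for x ≠ -1. -/
theorem stmt_11 :
    ∀ x y : ℝ, x ≠ -1 →
      y * deriv (fun x' : ℝ => x' ^ 2 / (1 + x') ^ 2 + y ^ 2 / (1 + x') ^ 6) x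
      + (-(x * (1 + x) ^ 3) - (-3 / (1 + x)) * y ^ 2) *
          deriv (fun y' : ℝ => x ^ 2 / (1 + x) ^ 2 + y' ^ 2 / (1 + x) ^ 6) y = 0 := by
  intro x y hx
  have h : (1 + x) ≠ 0 := by intro h; apply hx; linarith
  have h2 : (1 + x) ^ 2 ≠ 0 := pow_ne_zero _ h
  have h6 : (1 + x) ^ 6 ≠ 0 := pow_ne_zero _ h
  have hd1 : HasDerivAt (fun x' : ℝ => x' ^ 2 / (1 + x') ^ 2 + y ^ 2 / (1 + x') ^ 6)
      ((2 * x * (1 + x) ^ 2 - x ^ 2 * (2 * (1 + x))) / ((1 + x) ^ 2) ^ 2 +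
        (0 * (1 + x) ^ 6 - y ^ 2 * (6 * (1 + x) ^ 5)) / ((1 + x) ^ 6) ^ 2) x := by
    have ha : HasDerivAt (fun x' : ℝ => x' ^ 2 / (1 + x') ^ 2)
        ((2 * x * (1 + x) ^ 2 - x ^ 2 * (2 * (1 + x))) / ((1 + x) ^ 2) ^ 2) x := by
      have hu : HasDerivAt (fun x' : ℝ => x' ^ 2) (2 * x) x := by
        simpa using (hasDerivAt_pow 2 x)
      have hv : HasDerivAt (fun x' : ℝ => (1 + x') ^ 2) (2 * (1 + x)) x := by
        have : HasDerivAt (fun x' : ℝ => 1 + x') 1 x :=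
          (hasDerivAt_id x).const_add 1
        simpa using (this.fun_pow 2)
      simpa using hu.fun_div hv h2
    have hb : HasDerivAt (fun x' : ℝ => y ^ 2 / (1 + x') ^ 6)
        ((0 * (1 + x) ^ 6 - y ^ 2 * (6 * (1 + x) ^ 5)) / ((1 + x) ^ 6) ^ 2) x := by
      have hu : HasDerivAt (fun _ : ℝ => y ^ 2) 0 x := hasDerivAt_const x _
      have hv : HasDerivAt (fun x' : ℝ => (1 + x') ^ 6) (6 * (1 + x) ^ 5) x := by
        have : HasDerivAt (fun x' : ℝ => 1 + x') 1 x :=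
          (hasDerivAt_id x).const_add 1
        simpa using (this.fun_pow 6)
      exact hu.div hv h6
    exact ha.add hb
  have hd2 : HasDerivAt (fun y' : ℝ => x ^ 2 / (1 + x) ^ 2 + y' ^ 2 / (1 + x) ^ 6)
      (2 * y / (1 + x) ^ 6) y := by
    have hu : HasDerivAt (fun y' : ℝ => y' ^ 2) (2 * y) y := by
      simpa using (hasDerivAt_pow 2 y)
    simpa using ((hu.div_const ((1 + x) ^ 6)).const_add (x ^ 2 / (1 + x) ^ 2))
  rw [hd1.deriv, hd2.deriv]
  field_simp
  ring
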